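/- Let g_z²(s) = δ(s)/((s² + z²)|ln(s² + z²)|) pointwise-comparable weights: suppose there exist constants 0 < δ' ≤ δ such that δ'/((s²+z²)|ln(s²+z²)|) ≤ g_z²(s) ≤ δ/((s²+z²)|ln(s²+z²)|) for s, z ∈ (0, r] with r ∈ (0, 1/4). Define ξ_z(r) = ∫₀^r g_z²(t) t dt. Then δ'/2 ≤ liminf_{z→0} ξ_z(r)/|ln|ln z²|| and limsup_{z→0} ξ_z(r)/|ln|ln z²|| ≤ δ/2. -/

import Mathlib

open MeasureTheory Set Real Filter

lemma aux_ftc (r z : ℝ) (hr0 : 0 < r) (hr4 : r < 1/4) (hz : z ∈ Ioc (0:ℝ) r) :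
    ∫ t in Ioo (0:ℝ) r, t / ((t^2 + z^2) * |Real.log (t^2 + z^2)|)
      = (1/2) * (Real.log (-Real.log (z^2)) - Real.log (-Real.log (r^2 + z^2))) := by
  have hz0 : 0 < z := hz.1
  have hzr : z ≤ r := hz.2
  have hub : ∀ t ∈ Icc (0:ℝ) r, 0 < t^2 + z^2 ∧ t^2 + z^2 < 1 := by
    intro t ht
    constructor
    · positivity
    · have h1 : t^2 ≤ r^2 := by nlinarith [ht.1, ht.2]
      have h2 : z^2 ≤ r^2 := by nlinarith
      nlinarith
  have hderiv : ∀ t ∈ Icc (0:ℝ) r,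
      HasDerivAt (fun t => -(1/2) * Real.log (-Real.log (t^2 + z^2)))
        (t / ((t^2 + z^2) * |Real.log (t^2 + z^2)|)) t := by
    intro t ht
    obtain ⟨hu0, hu1⟩ := hub t ht
    have hlogneg : Real.log (t^2 + z^2) < 0 := Real.log_neg hu0 hu1
    have h1 : HasDerivAt (fun t : ℝ => t^2 + z^2) (2*t) t := by
      simpa using (hasDerivAt_pow 2 t).add_const (z^2)
    have h2 : HasDerivAt (fun t : ℝ => -Real.log (t^2 + z^2)) (-(2*t/(t^2+z^2))) t :=
      (h1.log hu0.ne').neg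
    have h3 : HasDerivAt (fun t : ℝ => Real.log (-Real.log (t^2 + z^2)))
        ((-(2*t/(t^2+z^2))) / (-Real.log (t^2 + z^2))) t :=
      h2.log (neg_pos.mpr hlogneg).ne'
    have h4 := h3.const_mul (-(1/2) : ℝ)
    refine h4.congr_deriv (Eq.symm ?_)
    rw [abs_of_neg hlogneg, neg_div_neg_eq]
    field_simp
  have hcont : ContinuousOn (fun t : ℝ => t / ((t^2 + z^2) * |Real.log (t^2 + z^2)|))
      (Icc 0 r) := by
    apply ContinuousOn.div continuousOn_id
    · exact (((continuousOn_id.pow 2).add continuousOn_const).mul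
        ((Real.continuousOn_log.comp ((continuousOn_id.pow 2).add continuousOn_const)
          (fun t ht => (hub t ht).1.ne')).abs))
    · intro t ht
      obtain ⟨hu0, hu1⟩ := hub t ht
      have hl := Real.log_neg hu0 hu1
      exact (mul_pos hu0 (abs_pos.mpr hl.ne)).ne'
  have hIoo : ∫ t in Ioo (0:ℝ) r, t / ((t^2 + z^2) * |Real.log (t^2 + z^2)|)
      = ∫ t in (0:ℝ)..r, t / ((t^2 + z^2) * |Real.log (t^2 + z^2)|) := by
    rw [intervalIntegral.integral_of_le hr0.le, MeasureTheory.integral_Ioc_eq_integral_Ioo]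
  rw [hIoo, intervalIntegral.integral_eq_sub_of_hasDerivAt
    (fun t ht => hderiv t (by rwa [uIcc_of_le hr0.le] at ht))
    ((hcont.mono (by rw [uIcc_of_le hr0.le])).intervalIntegrable)]
  have : (0:ℝ)^2 + z^2 = z^2 := by ring
  rw [this]
  ring

lemma aux_bounds (r z : ℝ) (hr0 : 0 < r) (hr4 : r < 1/4) (hz : z ∈ Ioc (0:ℝ) r)
    (g : ℝ → ℝ → ℝ) (hmeas : ∀ z, Measurable (g z))
    (δ δ' : ℝ)
    (hbound : ∀ s ∈ Ioc (0:ℝ) r,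
      δ' / ((s ^ 2 + z ^ 2) * |Real.log (s ^ 2 + z ^ 2)|) ≤ (g z s) ^ 2 ∧
      (g z s) ^ 2 ≤ δ / ((s ^ 2 + z ^ 2) * |Real.log (s ^ 2 + z ^ 2)|)) :
    δ' * ((1/2) * (Real.log (-Real.log (z^2)) - Real.log (-Real.log (r^2 + z^2))))
      ≤ (∫ t in Ioo (0:ℝ) r, (g z t) ^ 2 * t) ∧
    (∫ t in Ioo (0:ℝ) r, (g z t) ^ 2 * t)
      ≤ δ * ((1/2) * (Real.log (-Real.log (z^2)) - Real.log (-Real.log (r^2 + z^2)))) := by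
  have hz0 : 0 < z := hz.1
  have hub : ∀ t ∈ Icc (0:ℝ) r, 0 < t^2 + z^2 ∧ t^2 + z^2 < 1 := by
    intro t ht
    constructor
    · positivity
    · have h1 : t^2 ≤ r^2 := by nlinarith [ht.1, ht.2]
      have h2 : z^2 ≤ r^2 := by nlinarith [hz.2]
      nlinarith
  set h : ℝ → ℝ := fun t => t / ((t^2 + z^2) * |Real.log (t^2 + z^2)|) with hh
  have hcont : ContinuousOn h (Icc 0 r) := by
    apply ContinuousOn.div continuousOn_id
    · exact (((continuousOn_id.pow 2).add continuousOn_const).mul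
        ((Real.continuousOn_log.comp ((continuousOn_id.pow 2).add continuousOn_const)
          (fun t ht => (hub t ht).1.ne')).abs))
    · intro t ht
      obtain ⟨hu0, hu1⟩ := hub t ht
      have hl := Real.log_neg hu0 hu1
      exact (mul_pos hu0 (abs_pos.mpr hl.ne)).ne'
  have hInt : IntegrableOn h (Ioo 0 r) :=
    (hcont.integrableOn_Icc).mono_set Ioo_subset_Icc_self
  have hmg : AEStronglyMeasurable (fun t => (g z t) ^ 2 * t) (volume.restrict (Ioo 0 r)) :=
    (((hmeas z).pow_const 2).mul measurable_id).aestronglyMeasurable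
  have hgInt : IntegrableOn (fun t => (g z t) ^ 2 * t) (Ioo 0 r) := by
    apply Integrable.mono' (hInt.const_mul δ) hmg
    rw [ae_restrict_iff' measurableSet_Ioo]
    refine ae_of_all _ fun a ha => ?_
    have ha' : a ∈ Ioc (0:ℝ) r := Ioo_subset_Ioc_self ha
    have hb := (hbound a ha').2
    have h0 : (0:ℝ) ≤ (g z a)^2 * a := mul_nonneg (sq_nonneg _) ha.1.le
    rw [Real.norm_eq_abs, abs_of_nonneg h0]
    calc (g z a)^2 * a ≤ (δ / ((a^2 + z^2) * |Real.log (a^2 + z^2)|)) * a :=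
          mul_le_mul_of_nonneg_right hb ha.1.le
      _ = δ * h a := by rw [hh]; ring
  constructor
  · have := setIntegral_mono_on (hInt.const_mul δ') hgInt measurableSet_Ioo
      (fun a ha => by
        have ha' : a ∈ Ioc (0:ℝ) r := Ioo_subset_Ioc_self ha
        have hb := (hbound a ha').1
        calc δ' * h a = (δ' / ((a^2 + z^2) * |Real.log (a^2 + z^2)|)) * a := by rw [hh]; ring
          _ ≤ (g z a)^2 * a := mul_le_mul_of_nonneg_right hb ha.1.le)
    rwa [integral_const_mul, aux_ftc r z hr0 hr4 hz] at this
  · have := setIntegral_mono_on hgInt (hInt.const_mul δ) measurableSet_Ioo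
      (fun a ha => by
        have ha' : a ∈ Ioc (0:ℝ) r := Ioo_subset_Ioc_self ha
        have hb := (hbound a ha').2
        calc (g z a)^2 * a ≤ (δ / ((a^2 + z^2) * |Real.log (a^2 + z^2)|)) * a :=
              mul_le_mul_of_nonneg_right hb ha.1.le
          _ = δ * h a := by rw [hh]; ring)
    rwa [integral_const_mul, aux_ftc r z hr0 hr4 hz] at this

theorem stmt12 (r : ℝ) (hr : r ∈ Ioo (0:ℝ) (1/4))
    (g : ℝ → ℝ → ℝ) (hmeas : ∀ z, Measurable (g z))
    (δ δ' : ℝ) (hδ' : 0 < δ') (hδ : δ' ≤ δ)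
    (hbound : ∀ z ∈ Ioc (0:ℝ) r, ∀ s ∈ Ioc (0:ℝ) r,
      δ' / ((s ^ 2 + z ^ 2) * |Real.log (s ^ 2 + z ^ 2)|) ≤ (g z s) ^ 2 ∧
      (g z s) ^ 2 ≤ δ / ((s ^ 2 + z ^ 2) * |Real.log (s ^ 2 + z ^ 2)|)) :
    δ' / 2 ≤ Filter.liminf
        (fun z => (∫ t in Ioo (0:ℝ) r, (g z t) ^ 2 * t) / abs (Real.log (abs (Real.log (z ^ 2)))))
        (nhdsWithin 0 (Ioi 0)) ∧
    Filter.limsup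
        (fun z => (∫ t in Ioo (0:ℝ) r, (g z t) ^ 2 * t) / abs (Real.log (abs (Real.log (z ^ 2)))))
        (nhdsWithin 0 (Ioi 0)) ≤ δ / 2 := by
  have hr0 : 0 < r := hr.1
  have hr4 : r < 1/4 := hr.2
  set l : Filter ℝ := nhdsWithin 0 (Ioi 0) with hl
  set A : ℝ → ℝ := fun z => Real.log (-Real.log (z^2)) with hA
  set B : ℝ → ℝ := fun z => Real.log (-Real.log (r^2 + z^2)) with hB
  set q : ℝ → ℝ := fun z => ((1/2) * (A z - B z)) / A z with hq
  set u : ℝ → ℝ := fun z =>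
    (∫ t in Ioo (0:ℝ) r, (g z t) ^ 2 * t) / |Real.log (|Real.log (z ^ 2)|)| with hu
  -- For z ∈ Ioc 0 r : 1 < -log z², A z > 0, and |log|log z²|| = A z.
  have hAfacts : ∀ z ∈ Ioc (0:ℝ) r, 0 < A z ∧ |Real.log (|Real.log (z ^ 2)|)| = A z := by
    intro z hz
    have hz0 : 0 < z := hz.1
    have hz2 : (0:ℝ) < z^2 := pow_pos hz0 2
    have hz2lt : z^2 < Real.exp (-1) := by
      have h1 : z^2 ≤ r^2 := by nlinarith [hz.2]
      have h2 : (r:ℝ)^2 < 1/16 := by nlinarith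
      have h4 : Real.exp 1 < 16 := by
        have := Real.exp_one_lt_d9
        linarith
      have h3 : (1:ℝ)/16 < Real.exp (-1) := by
        rw [Real.exp_neg]
        have h5 : (16:ℝ)⁻¹ < (Real.exp 1)⁻¹ := by
          apply inv_strictAnti₀ (Real.exp_pos 1) h4
        linarith [h5]
      linarith
    have hlog : Real.log (z^2) < -1 := by
      have := Real.log_lt_log hz2 hz2lt
      rwa [Real.log_exp] at this
    have hneg : 1 < -Real.log (z^2) := by linarith
    have hApos : 0 < A z := by
      rw [hA]
      exact Real.log_pos hneg
    refine ⟨hApos, ?_⟩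
    rw [abs_of_neg (by linarith : Real.log (z^2) < 0)]
    exact abs_of_pos hApos
  -- integral bounds for z ∈ Ioc 0 r
  have hbnd : ∀ z ∈ Ioc (0:ℝ) r, δ' * q z ≤ u z ∧ u z ≤ δ * q z := by
    intro z hz
    obtain ⟨hApos, habs⟩ := hAfacts z hz
    obtain ⟨h1, h2⟩ := aux_bounds r z hr0 hr4 hz g hmeas δ δ' (hbound z hz)
    have hI : ((1/2) * (A z - B z)) = (1/2) * (Real.log (-Real.log (z^2))
        - Real.log (-Real.log (r^2 + z^2))) := rfl
    constructor
    · simp only [hu, hq]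
      rw [habs, ← mul_div_assoc]
      gcongr
    · simp only [hu, hq]
      rw [habs, ← mul_div_assoc]
      gcongr
  have hmem : Ioc (0:ℝ) r ∈ l := Ioc_mem_nhdsGT_of_mem ⟨le_refl 0, hr0⟩
  -- Tendsto A atTop
  have hAtop : Tendsto A l atTop := by
    have h1 : Tendsto (fun z : ℝ => z^2) l l := by
      apply tendsto_nhdsWithin_of_tendsto_nhds_of_eventually_within
      · simpa using ((continuous_pow 2).tendsto (0:ℝ)).mono_left nhdsWithin_le_nhds
      · filter_upwards [self_mem_nhdsWithin] with x hx
        exact pow_pos (mem_Ioi.mp hx) 2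
    exact Real.tendsto_log_atTop.comp
      (tendsto_neg_atTop_iff.mpr (Real.tendsto_log_nhdsGT_zero.comp h1))
  -- Tendsto B to a constant
  have hBlim : Tendsto B l (nhds (Real.log (-Real.log (r^2)))) := by
    have hr2 : (0:ℝ) < r^2 := pow_pos hr0 2
    have hr2' : r^2 < 1 := by nlinarith
    have hinner : ContinuousAt (fun z : ℝ => r^2 + z^2) 0 := by fun_prop
    have hne1 : r^2 + (0:ℝ)^2 ≠ 0 := by positivity
    have hne2 : -Real.log (r^2 + (0:ℝ)^2) ≠ 0 := by
      have : r^2 + (0:ℝ)^2 = r^2 := by ring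
      rw [this]
      exact neg_ne_zero.mpr (Real.log_neg hr2 hr2').ne
    have hc : ContinuousAt B 0 := ContinuousAt.log (hinner.log hne1).neg hne2
    have h2 := hc.tendsto.mono_left (nhdsWithin_le_nhds (s := Ioi (0:ℝ)))
    have e0 : B 0 = Real.log (-Real.log (r^2)) := by
      simp only [hB]
      norm_num
    rw [← e0]
    exact h2
  -- Tendsto q (𝓝 (1/2))
  have hqlim : Tendsto q l (nhds (1/2)) := by
    have hdiv : Tendsto (fun z => B z / A z) l (nhds 0) := hBlim.div_atTop hAtop
    have h2 : Tendsto (fun z => 1/2 - (1/2) * (B z / A z)) l (nhds (1/2)) := by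
      have := (tendsto_const_nhds (x := (1/2:ℝ)) (f := l)).sub
        ((tendsto_const_nhds (x := (1/2:ℝ)) (f := l)).mul hdiv)
      simpa using this
    apply h2.congr'
    filter_upwards [hmem] with z hz
    have hApos := (hAfacts z hz).1
    simp only [hq]
    field_simp
    try ring
  have hlo : ∀ᶠ z in l, δ' * q z ≤ u z := by
    filter_upwards [hmem] with z hz using (hbnd z hz).1
  have hhi : ∀ᶠ z in l, u z ≤ δ * q z := by
    filter_upwards [hmem] with z hz using (hbnd z hz).2
  have htlo : Tendsto (fun z => δ' * q z) l (nhds (δ' / 2)) := by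
    have h := hqlim.const_mul δ'
    rwa [show δ' * (1/2) = δ' / 2 by ring] at h
  have hthi : Tendsto (fun z => δ * q z) l (nhds (δ / 2)) := by
    have h := hqlim.const_mul δ
    rwa [show δ * (1/2) = δ / 2 by ring] at h
  haveI hnb : l.NeBot := by
    have h : NeBot (nhdsWithin (0:ℝ) (Ioi 0)) := inferInstance
    rwa [hl]
  constructor
  · have h1 : δ' / 2 = Filter.liminf (fun z => δ' * q z) l := (htlo.liminf_eq).symm
    rw [h1]
    have hev : ∀ᶠ z in l, u z ≤ δ / 2 + 1 := by
      filter_upwards [hhi, hthi.eventually_lt_const (by linarith : δ/2 < δ/2 + 1)] with z hz1 hz2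
      linarith
    exact Filter.liminf_le_liminf hlo htlo.isBoundedUnder_ge
      (Filter.isCoboundedUnder_ge_of_eventually_le l hev)
  · have h1 : δ / 2 = Filter.limsup (fun z => δ * q z) l := (hthi.limsup_eq).symm
    rw [h1]
    have hev : ∀ᶠ z in l, δ' / 2 - 1 ≤ u z := by
      filter_upwards [hlo, htlo.eventually_const_lt (by linarith : δ'/2 - 1 < δ'/2)] with z hz1 hz2
      linarith
    exact Filter.limsup_le_limsup hhi
      (Filter.isCoboundedUnder_le_of_eventually_le l hev) hthi.isBoundedUnder_le
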